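/- Define λ_c(ε) := inf{ λ > 0 : there exists m ∈ H¹(𝕋²; S²) with F_{ε,λ}[m] < 0 } for 0 < ε < 1. Then the function ε ↦ λ_c(ε) is Lipschitz-continuous on every compact subset of (0,1); in particular, for every δ ∈ (0, 1/2) it is Lipschitz on [δ, 1−δ] with Lipschitz constant at most δ^{−1}(1 + 1/|log δ|)·sup_{ε∈[δ,1−δ]} λ_c(ε). -/

import Mathlib

set_option maxHeartbeats 400000


open MeasureTheory Real Filter

noncomputable section

/-- The plane `ℝ²`, modeled as functions `Fin 2 → ℝ`. -/
abbrev R2 : Type := Fin 2 → ℝ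

/-- The target space `ℝ³`. -/
abbrev R3 : Type := Fin 3 → ℝ

/-- A fundamental domain for the unit torus `𝕋² = ℝ²/ℤ²`. -/
def cube : Set R2 := Set.univ.pi fun _ => Set.Ico (0 : ℝ) 1

/-- The Euclidean norm on `ℝ²`. -/
def en2 (z : R2) : ℝ := Real.sqrt (∑ i, z i ^ 2)

/-- The Euclidean norm on `ℝ³`. -/
def en3 (v : R3) : ℝ := Real.sqrt (∑ i, v i ^ 2)

/-- `|∇f(x)|²` for a scalar function. -/
def gradNormSq (f : R2 → ℝ) (x : R2) : ℝ :=
  ∑ j, (fderiv ℝ f x (Pi.single j 1)) ^ 2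

/-- `|∇f(x)|` for a scalar function. -/
def gradNorm (f : R2 → ℝ) (x : R2) : ℝ := Real.sqrt (gradNormSq f x)

/-- `|∇m(x)|²` for a map `m : ℝ² → ℝ³` (Frobenius norm squared). -/
def gradVSq (m : R2 → R3) (x : R2) : ℝ :=
  ∑ j, ∑ i, (fderiv ℝ m x (Pi.single j 1) i) ^ 2

/-- The squared homogeneous `H^{1/2}` seminorm on the torus (real-space formula). -/
def H12 (f : R2 → ℝ) : ℝ :=
  (1 / (4 * π)) * ∫ x in cube, ∫ z : R2, (f (x + z) - f x) ^ 2 / en2 z ^ 3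

/-- A (strong) magnetization in `H¹(𝕋²; S²)`: a continuously differentiable
`ℤ²`-periodic map with values in the unit sphere `S² ⊂ ℝ³`. -/
def Mag (m : R2 → R3) : Prop :=
  ContDiff ℝ 1 m ∧
    (∀ (x : R2) (n : Fin 2 → ℤ), m (x + fun i => (n i : ℝ)) = m x) ∧
    ∀ x, ∑ i, (m x i) ^ 2 = 1

/-- The reduced thin-film energy `F_{ε,λ}`. -/
def Fen (ε lam : ℝ) (m : R2 → R3) : ℝ :=
  (∫ x in cube, (ε / 2 * gradVSq m x + (1 - (m x 2) ^ 2) / (2 * ε)))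
    - lam / |Real.log ε| * H12 (fun x => m x 2)

/-- The north pole `e₃ = (0,0,1)`. -/
def e3 : R3 := ![0, 0, 1]

/-- The critical threshold `λ_c(ε)`: the infimum of the `λ > 0` for which the minimal
energy `min F_{ε,λ}` becomes negative. -/
def lamCrit (ε : ℝ) : ℝ :=
  sInf {lam : ℝ | 0 < lam ∧ ∃ m : R2 → R3, Mag m ∧ Fen ε lam m < 0}


-- ## Auxiliary lemmas

def Scrit (ε : ℝ) : Set ℝ := {lam : ℝ | 0 < lam ∧ ∃ m : R2 → R3, Mag m ∧ Fen ε lam m < 0}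

lemma lamCrit_eq (ε : ℝ) : lamCrit ε = sInf (Scrit ε) := rfl

lemma gradVSq_nonneg (m : R2 → R3) (x : R2) : 0 ≤ gradVSq m x :=
  Finset.sum_nonneg fun _ _ => Finset.sum_nonneg fun _ _ => sq_nonneg _

lemma mag_m3_sq_le {m : R2 → R3} (hm : Mag m) (x : R2) : (m x 2) ^ 2 ≤ 1 := by
  have h := hm.2.2 x
  rw [← h]
  exact Finset.single_le_sum (fun i _ => sq_nonneg (m x i)) (Finset.mem_univ 2)

lemma measurableSet_cube : MeasurableSet cube :=
  MeasurableSet.univ_pi fun _ => measurableSet_Ico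

lemma H12_nonneg (f : R2 → ℝ) : 0 ≤ H12 f := by
  apply mul_nonneg (by positivity)
  apply setIntegral_nonneg measurableSet_cube
  intro x _
  apply integral_nonneg
  intro z
  have h1 : (0:ℝ) ≤ en2 z := Real.sqrt_nonneg _
  positivity

lemma cube_subset : cube ⊆ Set.univ.pi fun _ => Set.Icc (0 : ℝ) 1 :=
  fun x hx i hi => Set.Ico_subset_Icc_self (hx i hi)

lemma bulk_cont {m : R2 → R3} (hm : ContDiff ℝ 1 m) (ε : ℝ) :
    Continuous fun p : R2 => ε / 2 * gradVSq m p + (1 - (m p 2) ^ 2) / (2 * ε) := by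
  have h1 : Continuous (fderiv ℝ m) := hm.continuous_fderiv one_ne_zero
  have h2 : Continuous fun p => gradVSq m p := by
    unfold gradVSq
    refine continuous_finset_sum _ fun j _ => continuous_finset_sum _ fun i _ => ?_
    exact ((continuous_apply i).comp
      ((ContinuousLinearMap.apply ℝ R3 ((Pi.single j 1 : R2))).continuous.comp h1)).pow 2
  have h3 : Continuous fun p => m p 2 := (continuous_apply 2).comp hm.continuous
  exact (continuous_const.mul h2).add ((continuous_const.sub (h3.pow 2)).div_const _)

lemma bulk_integrableOn {m : R2 → R3} (hm : ContDiff ℝ 1 m) (ε : ℝ) :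
    IntegrableOn (fun p : R2 => ε / 2 * gradVSq m p + (1 - (m p 2) ^ 2) / (2 * ε)) cube := by
  exact ((bulk_cont hm ε).continuousOn.integrableOn_compact
    (isCompact_univ_pi fun _ => isCompact_Icc)).mono_set cube_subset

lemma Fen_scale {x y : ℝ} (hx : x ∈ Set.Ioo (0:ℝ) 1) (hy : y ∈ Set.Ioo (0:ℝ) 1)
    {m : R2 → R3} (hm : Mag m) (lam : ℝ) :
    Fen y (lam * (max (y / x) (x / y) * (|Real.log y| / |Real.log x|))) m
      ≤ max (y / x) (x / y) * Fen x lam m := by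
  obtain ⟨hx0, hx1⟩ := hx
  obtain ⟨hy0, hy1⟩ := hy
  set r := max (y / x) (x / y) with hrdef
  have hlx : 0 < |Real.log x| := abs_pos.2 (ne_of_lt (Real.log_neg hx0 hx1))
  have hly : 0 < |Real.log y| := abs_pos.2 (ne_of_lt (Real.log_neg hy0 hy1))
  have hr : 0 < r := lt_of_lt_of_le (div_pos hy0 hx0) (le_max_left _ _)
  have h1 : y ≤ r * x := (div_le_iff₀ hx0).1 (le_max_left _ _)
  have h2 : x ≤ r * y := (div_le_iff₀ hy0).1 (le_max_right _ _)
  have key : (∫ p in cube, (y / 2 * gradVSq m p + (1 - (m p 2) ^ 2) / (2 * y)))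
      ≤ r * ∫ p in cube, (x / 2 * gradVSq m p + (1 - (m p 2) ^ 2) / (2 * x)) := by
    rw [← integral_const_mul]
    apply setIntegral_mono_on (bulk_integrableOn hm.1 y)
      ((bulk_integrableOn hm.1 x).const_mul r) measurableSet_cube
    intro p _
    have hG := gradVSq_nonneg m p
    have hA : 0 ≤ 1 - (m p 2) ^ 2 := by linarith [mag_m3_sq_le hm p]
    have e1 : (1 - (m p 2) ^ 2) / (2 * y) ≤ r * ((1 - (m p 2) ^ 2) / (2 * x)) := by
      rw [mul_div_assoc']
      rw [div_le_div_iff₀ (by positivity) (by positivity)]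
      nlinarith [mul_le_mul_of_nonneg_left h2 hA]
    have e2 : y / 2 * gradVSq m p ≤ r * (x / 2 * gradVSq m p) := by
      have : y / 2 * gradVSq m p ≤ (r * x) / 2 * gradVSq m p :=
        mul_le_mul_of_nonneg_right (by linarith) hG
      calc y / 2 * gradVSq m p ≤ (r * x) / 2 * gradVSq m p := this
        _ = r * (x / 2 * gradVSq m p) := by ring
    rw [mul_add]
    exact add_le_add e2 e1
  have hH := H12_nonneg (fun p => m p 2)
  have hco : lam * (r * (|Real.log y| / |Real.log x|)) / |Real.log y|
      = r * (lam / |Real.log x|) := by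
    field_simp
  show (∫ p in cube, (y / 2 * gradVSq m p + (1 - (m p 2) ^ 2) / (2 * y)))
      - _ / |Real.log y| * H12 (fun p => m p 2) ≤ _
  rw [hco]
  unfold Fen
  rw [mul_sub, mul_assoc]
  exact sub_le_sub key le_rfl

lemma Scrit_scale {x y : ℝ} (hx : x ∈ Set.Ioo (0:ℝ) 1) (hy : y ∈ Set.Ioo (0:ℝ) 1)
    {lam : ℝ} (hl : lam ∈ Scrit x) :
    lam * (max (y / x) (x / y) * (|Real.log y| / |Real.log x|)) ∈ Scrit y := by
  obtain ⟨hl0, m, hm, hF⟩ := hl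
  have hr : 0 < max (y / x) (x / y) :=
    lt_of_lt_of_le (div_pos hy.1 hx.1) (le_max_left _ _)
  have hlx : 0 < |Real.log x| := abs_pos.2 (ne_of_lt (Real.log_neg hx.1 hx.2))
  have hly : 0 < |Real.log y| := abs_pos.2 (ne_of_lt (Real.log_neg hy.1 hy.2))
  refine ⟨by positivity, m, hm, ?_⟩
  calc Fen y _ m ≤ max (y / x) (x / y) * Fen x lam m := Fen_scale hx hy hm lam
    _ < 0 := mul_neg_of_pos_of_neg hr hF

lemma lamCrit_nonneg (ε : ℝ) : 0 ≤ lamCrit ε :=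
  Real.sInf_nonneg fun _ hx => hx.1.le

lemma lamCrit_le_scale {x y : ℝ} (hx : x ∈ Set.Ioo (0:ℝ) 1) (hy : y ∈ Set.Ioo (0:ℝ) 1) :
    lamCrit y ≤ max (y / x) (x / y) * (|Real.log y| / |Real.log x|) * lamCrit x := by
  set ρ := max (y / x) (x / y) * (|Real.log y| / |Real.log x|) with hρdef
  have hρ : 0 < ρ := by
    apply mul_pos (lt_of_lt_of_le (div_pos hy.1 hx.1) (le_max_left _ _))
    exact div_pos (abs_pos.2 (ne_of_lt (Real.log_neg hy.1 hy.2)))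
      (abs_pos.2 (ne_of_lt (Real.log_neg hx.1 hx.2)))
  rw [lamCrit_eq, lamCrit_eq]
  rcases Set.eq_empty_or_nonempty (Scrit x) with hS | hS
  · by_cases hSy : (Scrit y).Nonempty
    · obtain ⟨μ, hμ⟩ := hSy
      have := Scrit_scale hy hx hμ
      rw [hS] at this
      exact absurd this (Set.notMem_empty _)
    · rw [hS, Set.not_nonempty_iff_eq_empty.1 hSy, Real.sInf_empty]
      simp
  · have hb : BddBelow (Scrit y) := ⟨0, fun z hz => hz.1.le⟩
    have h1 : ∀ lam ∈ Scrit x, sInf (Scrit y) ≤ ρ * lam := by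
      intro lam hl
      have := csInf_le hb (Scrit_scale hx hy hl)
      rwa [mul_comm] at this
    have h2 : sInf (Scrit y) / ρ ≤ sInf (Scrit x) := by
      apply le_csInf hS
      intro lam hl
      exact (div_le_iff₀' hρ).2 (h1 lam hl)
    calc sInf (Scrit y) = sInf (Scrit y) / ρ * ρ := by field_simp
      _ ≤ sInf (Scrit x) * ρ := mul_le_mul_of_nonneg_right h2 hρ.le
      _ = ρ * sInf (Scrit x) := mul_comm _ _

/-- Numeric bounds for `log 3`. -/
lemma log_three_bounds : 1.0978 < Real.log 3 ∧ Real.log 3 < 1.0993 := by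
  have h := Real.abs_log_sub_add_sum_range_le (x := 1/3) (abs_lt.2 ⟨by norm_num, by norm_num⟩) 6
  have e0 : Real.log (1 - 1/3) = Real.log 2 - Real.log 3 := by
    rw [show (1:ℝ) - 1/3 = 2/3 by norm_num, Real.log_div (by norm_num) (by norm_num)]
  rw [e0, show |(1/3:ℝ)| = 1/3 by rw [abs_of_nonneg]; norm_num] at h
  have hs : ∑ i ∈ Finset.range 6, (1/3:ℝ) ^ (i + 1) / (↑i + 1) = 17731/43740 := by
    simp [Finset.sum_range_succ]
    norm_num
  rw [hs, show ((1:ℝ)/3) ^ (6 + 1) / (1 - 1/3) = 1/1458 by norm_num] at h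
  have h2 := abs_le.1 h
  have c1 := Real.log_two_gt_d9
  have c2 := Real.log_two_lt_d9
  constructor <;> [nlinarith [h2.2]; nlinarith [h2.1]]

/-- `2 δ |log δ| ≤ 1 - δ` for `δ ∈ (0, 1/4]`. -/
lemma two_dv_le {δ : ℝ} (h0 : 0 < δ) (h4 : δ ≤ 1/4) : 2*δ*(-Real.log δ) ≤ 1 - δ := by
  set q : ℝ → ℝ := fun t => 1 - t + 2*(t * Real.log t) with hq
  have hanti : AntitoneOn q (Set.Icc δ (1/4)) := by
    apply antitoneOn_of_deriv_nonpos (convex_Icc _ _)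
    · apply ContinuousOn.add (by fun_prop)
      apply ContinuousOn.mul continuousOn_const
      exact continuousOn_id.mul (Real.continuousOn_log.mono (fun t ht => ne_of_gt (lt_of_lt_of_le h0 ht.1)))
    · intro t ht
      rw [interior_Icc] at ht
      have h1 : t ≠ 0 := ne_of_gt (h0.trans ht.1)
      exact (((hasDerivAt_id t).neg.const_add 1).add
        ((Real.hasDerivAt_mul_log h1).const_mul 2)).differentiableAt.differentiableWithinAt
    · intro t ht
      rw [interior_Icc] at ht
      have h1 : (0:ℝ) < t := h0.trans ht.1
      have hd : HasDerivAt q (-1 + 2*(Real.log t + 1)) t :=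
        (((hasDerivAt_id t).neg.const_add 1).add ((Real.hasDerivAt_mul_log h1.ne').const_mul 2))
      rw [hd.deriv]
      have hlt : Real.log t ≤ Real.log (1/4) := Real.log_le_log h1 ht.2.le
      have e1 : Real.log (1/4:ℝ) = -(2*Real.log 2) := by
        rw [one_div, Real.log_inv, show (4:ℝ) = 2^(2:ℕ) by norm_num, Real.log_pow]
        push_cast; ring
      nlinarith [Real.log_two_gt_d9]
  have hqq := hanti (Set.mem_Icc.2 ⟨le_refl δ, h4⟩) (Set.mem_Icc.2 ⟨h4, le_refl _⟩) h4
  have e1 : Real.log (1/4:ℝ) = -(2*Real.log 2) := by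
    rw [one_div, Real.log_inv, show (4:ℝ) = 2^(2:ℕ) by norm_num, Real.log_pow]
    push_cast; ring
  have hq4 : q (1/4) = 3/4 - Real.log 2 := by
    rw [hq]; simp only; rw [e1]; ring
  have : q (1/4) ≤ q δ := hqq
  rw [hq4] at this
  have c2 := Real.log_two_lt_d9
  simp only [hq] at this
  nlinarith


private lemma P3_nonneg {d : ℝ} (hd1 : 1/4 ≤ d) (hd2 : d ≤ 3/8) :
    0 ≤ (0.2869 + (4/3)*(d - 1/4))*(1-d)
      + (1.38629437 - 3.2372*(d - 1/4))*((0.2869 + (4/3)*(d - 1/4))*(1-2*d) - d) := by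
  nlinarith [sq_nonneg (d - 1/4), sq_nonneg (d - 3/8),
    mul_nonneg (show (0:ℝ) ≤ d - 1/4 by linarith) (show (0:ℝ) ≤ 3/8 - d by linarith),
    mul_nonneg (mul_nonneg (show (0:ℝ) ≤ d - 1/4 by linarith) (show (0:ℝ) ≤ 3/8 - d by linarith)) (show (0:ℝ) ≤ d - 1/4 by linarith),
    mul_nonneg (mul_nonneg (show (0:ℝ) ≤ d - 1/4 by linarith) (show (0:ℝ) ≤ 3/8 - d by linarith)) (show (0:ℝ) ≤ 3/8 - d by linarith)]

private lemma Q3_nonneg {c w : ℝ} (hw0 : 0 ≤ w) (hw1 : w ≤ 1/8)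
    (c1 : 0.6931471803 < c) (c2 : c < 0.6931471808) :
    0 ≤ (2*c^2 + 2*c - 1 - (16*c - 8*1.0978)/2)
      + w*((2*c + 1)*(16*c - 8*1.0978) - 4*c - 2) - 4*(16*c - 8*1.0978)*w^2 := by
  have e1 : 0 ≤ c - 0.6931471803 := by linarith
  have e2 : 0 ≤ 0.6931471808 - c := by linarith
  nlinarith [mul_nonneg hw0 (show (0:ℝ) ≤ 1/8 - w by linarith), sq_nonneg w,
    mul_nonneg hw0 e1, mul_nonneg hw0 e2, mul_nonneg e1 e2,
    mul_nonneg (mul_nonneg hw0 hw0) e1, mul_nonneg (mul_nonneg hw0 hw0) e2,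
    mul_nonneg (mul_nonneg hw0 (show (0:ℝ) ≤ 1/8 - w by linarith)) e1,
    mul_nonneg (mul_nonneg hw0 (show (0:ℝ) ≤ 1/8 - w by linarith)) e2]

private lemma P2_nonneg {c d : ℝ} (hd1 : 3/8 ≤ d) (hd2 : d ≤ 1/2)
    (c1 : 0.6931471803 < c) (c2 : c < 0.6931471808) :
    0 ≤ (c + 2*d - 1)*(1-d)
      + (c + (16*c - 8*1.0978)*(1/2 - d))*((c + 2*d - 1)*(1-2*d) - d) := by
  have hident : (c + 2*d - 1)*(1-d)
      + (c + (16*c - 8*1.0978)*(1/2 - d))*((c + 2*d - 1)*(1-2*d) - d)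
      = (1/2 - d)*((2*c^2 + 2*c - 1 - (16*c - 8*1.0978)/2)
        + (1/2 - d)*((2*c + 1)*(16*c - 8*1.0978) - 4*c - 2)
        - 4*(16*c - 8*1.0978)*(1/2 - d)^2) := by ring
  rw [hident]
  exact mul_nonneg (by linarith) (Q3_nonneg (by linarith) (by linarith) c1 c2)

private lemma glue {δ u v U V : ℝ} (hδ2 : δ ≤ 1/2) (h1δ : (0:ℝ) < 1 - δ)
    (hu0 : 0 < u) (hv0 : 0 < v) (hUl : U ≤ u) (hVu : v ≤ V)
    (hP : 0 ≤ U*(1-δ) + V*(U*(1-2*δ) - δ)) :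
    δ * v * (1 + u) ≤ (1-δ) * u * (1 + v) := by
  have hBU : U*(1-2*δ) - δ ≤ u*(1-2*δ) - δ := by
    nlinarith [mul_nonneg (sub_nonneg.2 hUl) (show (0:ℝ) ≤ 1-2*δ by linarith)]
  rcases le_or_gt 0 (U*(1-2*δ) - δ) with hB0 | hB0
  · nlinarith [mul_nonneg hv0.le (le_trans hB0 hBU), mul_nonneg hu0.le h1δ.le]
  · have hmain : V*(U*(1-2*δ) - δ) ≤ v*(u*(1-2*δ) - δ) := by
      nlinarith [mul_nonneg (sub_nonneg.2 hVu) (neg_nonneg.2 hB0.le),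
        mul_nonneg hv0.le (sub_nonneg.2 hBU)]
    nlinarith [hP, hmain, mul_nonneg (sub_nonneg.2 hUl) h1δ.le]

/-- The key comparison inequality `δ v (1+u) ≤ (1-δ) u (1+v)`. -/
lemma W_nonneg {δ : ℝ} (h0 : 0 < δ) (h2 : δ ≤ 1/2) :
    δ * (-Real.log δ) * (1 + -Real.log (1-δ)) ≤ (1-δ) * (-Real.log (1-δ)) * (1 + -Real.log δ) := by
  have h1δ : (0:ℝ) < 1 - δ := by linarith
  have hδ1 : δ < 1 := by linarith
  have hu0 : 0 < -Real.log (1-δ) := neg_pos.2 (Real.log_neg h1δ (by linarith))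
  have hv0 : 0 < -Real.log δ := neg_pos.2 (Real.log_neg h0 hδ1)
  have hud : δ ≤ -Real.log (1-δ) := by
    have := Real.log_le_sub_one_of_pos h1δ
    linarith
  have c1 := Real.log_two_gt_d9
  have c2 := Real.log_two_lt_d9
  have g1 := log_three_bounds.1
  have g2 := log_three_bounds.2
  have e1 : Real.log (1/4:ℝ) = -(2*Real.log 2) := by
    rw [one_div, Real.log_inv, show (4:ℝ) = 2^(2:ℕ) by norm_num, Real.log_pow]
    push_cast; ring
  have e2 : Real.log (3/8:ℝ) = Real.log 3 - 3*Real.log 2 := by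
    rw [Real.log_div (by norm_num) (by norm_num), show (8:ℝ) = 2^(3:ℕ) by norm_num,
      Real.log_pow]
    push_cast; ring
  have e4 : Real.log (1/2:ℝ) = -Real.log 2 := by rw [one_div, Real.log_inv]
  rcases le_or_gt δ (1/4) with hc | hc
  · have hq : 2*δ*(-Real.log δ) ≤ 1 - δ := two_dv_le h0 hc
    nlinarith [mul_nonneg hv0.le (mul_nonneg (sub_nonneg.2 hud) (show (0:ℝ) ≤ 1-2*δ by linarith)),
      mul_nonneg (sub_nonneg.2 hud) h1δ.le,
      mul_nonneg h0.le (sub_nonneg.2 hq)]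
  rcases le_or_gt δ (3/8) with hc2 | hc2
  · -- region [1/4, 3/8]
    have hUl : 0.2869 + (4/3)*(δ - 1/4) ≤ -Real.log (1-δ) := by
      have hp : (0:ℝ) < (1-δ)*(4/3) := by positivity
      have h := Real.log_le_sub_one_of_pos hp
      rw [Real.log_mul (ne_of_gt h1δ) (by norm_num)] at h
      have e3 : Real.log (4/3:ℝ) = 2*Real.log 2 - Real.log 3 := by
        rw [Real.log_div (by norm_num) (by norm_num), show (4:ℝ) = 2^(2:ℕ) by norm_num,
          Real.log_pow]
        push_cast; ring
      rw [e3] at h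
      linarith
    have hVu : -Real.log δ ≤ 1.38629437 - 3.2372*(δ - 1/4) := by
      have hcc := (strictConcaveOn_log_Ioi.concaveOn).2 (show (1/4:ℝ) ∈ Set.Ioi (0:ℝ) by norm_num)
        (show (3/8:ℝ) ∈ Set.Ioi (0:ℝ) by norm_num)
        (show (0:ℝ) ≤ 8*(3/8 - δ) by linarith) (show (0:ℝ) ≤ 8*(δ - 1/4) by linarith) (by ring)
      simp only [smul_eq_mul] at hcc
      rw [show 8*(3/8 - δ)*(1/4) + 8*(δ - 1/4)*(3/8) = δ by ring, e1, e2] at hcc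
      nlinarith [mul_nonneg (show (0:ℝ) ≤ δ - 1/4 by linarith)
        (show (0:ℝ) ≤ 8*Real.log 3 - 8*Real.log 2 - 3.2372 by linarith)]
    exact glue h2 h1δ hu0 hv0 hUl hVu (P3_nonneg hc.le hc2)
  · -- region [3/8, 1/2]
    have hUl : Real.log 2 + 2*δ - 1 ≤ -Real.log (1-δ) := by
      have hp : (0:ℝ) < (1-δ)*2 := by linarith
      have h := Real.log_le_sub_one_of_pos hp
      rw [Real.log_mul (ne_of_gt h1δ) (by norm_num)] at h
      linarith
    have hVu : -Real.log δ ≤ Real.log 2 + (16*Real.log 2 - 8*1.0978)*(1/2 - δ) := by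
      have hcc := (strictConcaveOn_log_Ioi.concaveOn).2 (show (3/8:ℝ) ∈ Set.Ioi (0:ℝ) by norm_num)
        (show (1/2:ℝ) ∈ Set.Ioi (0:ℝ) by norm_num)
        (show (0:ℝ) ≤ 8*(1/2 - δ) by linarith) (show (0:ℝ) ≤ 8*(δ - 3/8) by linarith) (by ring)
      simp only [smul_eq_mul] at hcc
      rw [show 8*(1/2 - δ)*(3/8) + 8*(δ - 3/8)*(1/2) = δ by ring, e2, e4] at hcc
      nlinarith [mul_nonneg (show (0:ℝ) ≤ 1/2 - δ by linarith)
        (show (0:ℝ) ≤ 8*Real.log 3 - 8*1.0978 by linarith)]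
    exact glue h2 h1δ hu0 hv0 hUl hVu (P2_nonneg hc2.le h2 c1 c2)

/-- The function `F(L) = e^L (1 + 1/L)`, which equals `φ(t) = (1/t)(1+1/|log t|)` at `L = -log t`. -/
def FF (t : ℝ) : ℝ := Real.exp t + Real.exp t / t

lemma FF_hasDeriv {t : ℝ} (ht : t ≠ 0) :
    HasDerivAt FF (Real.exp t + (Real.exp t * t - Real.exp t * 1) / t ^ 2) t :=
  (Real.hasDerivAt_exp t).add ((Real.hasDerivAt_exp t).div (hasDerivAt_id t) ht)

/-- golden-ratio threshold -/
def grt : ℝ := (Real.sqrt 5 - 1) / 2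

lemma grt_facts : 0 < grt ∧ grt < Real.log 2 ∧ grt ^ 2 + grt - 1 = 0 := by
  have h5 : Real.sqrt 5 ^ 2 = 5 := Real.sq_sqrt (by norm_num)
  have h5n := Real.sqrt_nonneg 5
  have hlb : (2:ℝ) < Real.sqrt 5 := by nlinarith
  have hub : Real.sqrt 5 < 2.3862943606 := by nlinarith
  refine ⟨by unfold grt; linarith, ?_, by unfold grt; nlinarith⟩
  have := Real.log_two_gt_d9
  unfold grt; linarith

lemma FF_antitone : AntitoneOn FF (Set.Ioc 0 grt) := by
  apply antitoneOn_of_deriv_nonpos (convex_Ioc _ _)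
  · exact Real.continuous_exp.continuousOn.add
      (Real.continuous_exp.continuousOn.div continuousOn_id (fun x hx => ne_of_gt hx.1))
  · intro t ht
    rw [interior_Ioc] at ht
    exact (FF_hasDeriv (ne_of_gt ht.1)).differentiableAt.differentiableWithinAt
  · intro t ht
    rw [interior_Ioc] at ht
    rw [(FF_hasDeriv (ne_of_gt ht.1)).deriv]
    have htne : t ≠ 0 := ne_of_gt ht.1
    have heq : Real.exp t + (Real.exp t * t - Real.exp t * 1) / t ^ 2
        = Real.exp t * (t ^ 2 + t - 1) / t ^ 2 := by
      field_simp; ring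
    rw [heq]
    apply div_nonpos_of_nonpos_of_nonneg _ (sq_nonneg t)
    have h1 : t ^ 2 + t - 1 ≤ 0 := by
      have := grt_facts.2.2
      nlinarith [ht.1, ht.2, grt_facts.1]
    exact mul_nonpos_of_nonneg_of_nonpos (Real.exp_pos t).le h1

lemma FF_mono : MonotoneOn FF (Set.Ici grt) := by
  apply monotoneOn_of_deriv_nonneg (convex_Ici _)
  · exact Real.continuous_exp.continuousOn.add
      (Real.continuous_exp.continuousOn.div continuousOn_id
        (fun x hx => ne_of_gt (lt_of_lt_of_le grt_facts.1 hx)))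
  · intro t ht
    rw [interior_Ici] at ht
    exact (FF_hasDeriv (ne_of_gt (grt_facts.1.trans ht))).differentiableAt.differentiableWithinAt
  · intro t ht
    rw [interior_Ici] at ht
    have ht0 : 0 < t := grt_facts.1.trans ht
    rw [(FF_hasDeriv ht0.ne').deriv]
    have htne : t ≠ 0 := ht0.ne'
    have heq : Real.exp t + (Real.exp t * t - Real.exp t * 1) / t ^ 2
        = Real.exp t * (t ^ 2 + t - 1) / t ^ 2 := by
      field_simp; ring
    rw [heq]
    apply div_nonneg _ (sq_nonneg t)
    have h1 : 0 ≤ t ^ 2 + t - 1 := by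
      have hg := grt_facts.2.2
      have htg : grt < t := ht
      nlinarith [mul_nonneg (show (0:ℝ) ≤ t - grt by linarith)
        (show (0:ℝ) ≤ t + grt + 1 by nlinarith [grt_facts.1])]
    exact mul_nonneg (Real.exp_pos t).le h1

lemma FF_endpoint {δ : ℝ} (h0 : 0 < δ) (h2 : δ ≤ 1/2) :
    FF (-Real.log (1 - δ)) ≤ FF (-Real.log δ) := by
  have h1δ : (0:ℝ) < 1 - δ := by linarith
  have hu0 : 0 < -Real.log (1-δ) := neg_pos.2 (Real.log_neg h1δ (by linarith))
  have hv0 : 0 < -Real.log δ := neg_pos.2 (Real.log_neg h0 (by linarith))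
  have hW := W_nonneg h0 h2
  have he1 : Real.exp (-Real.log (1-δ)) = (1-δ)⁻¹ := by
    rw [Real.exp_neg, Real.exp_log h1δ]
  have he2 : Real.exp (-Real.log δ) = δ⁻¹ := by
    rw [Real.exp_neg, Real.exp_log h0]
  unfold FF
  rw [he1, he2]
  have hne1 : (1-δ) ≠ 0 := ne_of_gt h1δ
  have hne2 : Real.log (1-δ) ≠ 0 := by intro h; rw [h] at hu0; simp at hu0
  have hne3 : δ ≠ 0 := ne_of_gt h0
  have hne4 : Real.log δ ≠ 0 := by intro h; rw [h] at hv0; simp at hv0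
  have l1 : (1-δ)⁻¹ + (1-δ)⁻¹ / (-Real.log (1-δ))
      = (1 + -Real.log (1-δ)) / ((1-δ) * (-Real.log (1-δ))) := by
    field_simp
    ring
  have l2 : δ⁻¹ + δ⁻¹ / (-Real.log δ) = (1 + -Real.log δ) / (δ * (-Real.log δ)) := by
    field_simp
    ring
  rw [l1, l2, div_le_div_iff₀ (by positivity) (by positivity)]
  nlinarith [hW]

lemma phi_le {δ t : ℝ} (h0 : 0 < δ) (h2 : δ ≤ 1/2) (ht : t ∈ Set.Icc δ (1 - δ)) :
    FF (-Real.log t) ≤ FF (-Real.log δ) := by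
  have ht0 : 0 < t := lt_of_lt_of_le h0 ht.1
  have ht1 : t < 1 := lt_of_le_of_lt ht.2 (by linarith)
  have hL1 : -Real.log (1-δ) ≤ -Real.log t := neg_le_neg (Real.log_le_log ht0 ht.2)
  have hL2 : -Real.log t ≤ -Real.log δ := neg_le_neg (Real.log_le_log h0 ht.1)
  have hpos_t : 0 < -Real.log t := neg_pos.2 (Real.log_neg ht0 ht1)
  have hpos_1δ : 0 < -Real.log (1-δ) := neg_pos.2 (Real.log_neg (by linarith) (by linarith))
  rcases le_or_gt (-Real.log t) grt with hg | hg
  · exact (FF_antitone ⟨hpos_1δ, le_trans hL1 hg⟩ ⟨hpos_t, hg⟩ hL1).trans (FF_endpoint h0 h2)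
  · exact FF_mono (Set.mem_Ici.2 hg.le) (Set.mem_Ici.2 ((hg.trans_le hL2).le)) hL2

/-- θ(t) = log t - log(-log t), the potential whose increments control `lamCrit` ratios. -/
def thetaF (t : ℝ) : ℝ := Real.log t - Real.log (-Real.log t)

lemma ratio_le_exp {δ a b : ℝ} (h0 : 0 < δ) (h2 : δ ≤ 1/2)
    (ha : a ∈ Set.Icc δ (1-δ)) (hb : b ∈ Set.Icc δ (1-δ)) (hab : a ≤ b) :
    (b/a) * ((-Real.log a)/(-Real.log b))
      ≤ Real.exp (δ⁻¹ * (1 + 1/|Real.log δ|) * (b - a)) := by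
  have hmem : ∀ t ∈ Set.Icc δ (1-δ), 0 < t ∧ 0 < -Real.log t := by
    intro t ht
    have ht0 : 0 < t := lt_of_lt_of_le h0 ht.1
    exact ⟨ht0, neg_pos.2 (Real.log_neg ht0 (lt_of_le_of_lt ht.2 (by linarith)))⟩
  have hderiv : ∀ t ∈ Set.Icc δ (1-δ), HasDerivAt thetaF (FF (-Real.log t)) t := by
    intro t ht
    obtain ⟨ht0, htL⟩ := hmem t ht
    have h1 : HasDerivAt Real.log t⁻¹ t := Real.hasDerivAt_log ht0.ne'
    have hn : HasDerivAt (fun s : ℝ => -Real.log s) (-t⁻¹) t := h1.neg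
    have h3 : HasDerivAt Real.log (-Real.log t)⁻¹ (-Real.log t) := Real.hasDerivAt_log htL.ne'
    have h4 : HasDerivAt (fun s : ℝ => Real.log (-Real.log s)) ((-Real.log t)⁻¹ * -t⁻¹) t :=
      by have := h3.comp t hn; exact this
    have h5 := h1.sub h4
    have he : Real.exp (-Real.log t) = t⁻¹ := by rw [Real.exp_neg, Real.exp_log ht0]
    refine h5.congr_deriv ?_
    symm
    unfold FF
    rw [he]
    field_simp
    ring
  have hbound : ∀ t ∈ Set.Icc δ (1-δ),
      ‖FF (-Real.log t)‖ ≤ δ⁻¹ * (1 + 1/|Real.log δ|) := by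
    intro t ht
    obtain ⟨ht0, htL⟩ := hmem t ht
    have hFFpos : 0 < FF (-Real.log t) := by
      unfold FF
      exact add_pos (Real.exp_pos _) (div_pos (Real.exp_pos _) htL)
    rw [Real.norm_eq_abs, abs_of_pos hFFpos]
    have hkey := phi_le h0 h2 ht
    have hlδ : Real.log δ < 0 := Real.log_neg h0 (by linarith)
    have hCeq : FF (-Real.log δ) = δ⁻¹ * (1 + 1/|Real.log δ|) := by
      rw [abs_of_neg hlδ]
      unfold FF
      rw [Real.exp_neg, Real.exp_log h0, mul_add, mul_one, ← div_eq_mul_one_div]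
    linarith [hCeq ▸ hkey]
  have hMVT := Convex.norm_image_sub_le_of_norm_hasDerivWithin_le
    (fun t ht => (hderiv t ht).hasDerivWithinAt) hbound (convex_Icc _ _) ha hb
  have hθdiff : thetaF b - thetaF a ≤ δ⁻¹ * (1 + 1/|Real.log δ|) * (b - a) := by
    rw [Real.norm_eq_abs, Real.norm_eq_abs, abs_of_nonneg (sub_nonneg.2 hab)] at hMVT
    calc thetaF b - thetaF a ≤ |thetaF b - thetaF a| := le_abs_self _
      _ ≤ _ := hMVT
  obtain ⟨ha0, haL⟩ := hmem a ha
  obtain ⟨hb0, hbL⟩ := hmem b hb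
  have hpos : 0 < (b/a) * ((-Real.log a)/(-Real.log b)) :=
    mul_pos (div_pos hb0 ha0) (div_pos haL hbL)
  have hLHS : (b/a) * ((-Real.log a)/(-Real.log b)) = Real.exp (thetaF b - thetaF a) := by
    rw [← Real.exp_log hpos]
    congr 1
    rw [Real.log_mul (div_pos hb0 ha0).ne' (div_pos haL hbL).ne',
      Real.log_div hb0.ne' ha0.ne', Real.log_div haL.ne' hbL.ne']
    unfold thetaF
    ring
  rw [hLHS]
  exact Real.exp_le_exp.2 hθdiff


lemma expm1_le {s : ℝ} (hs : 0 ≤ s) : Real.exp s - 1 ≤ s * Real.exp s := by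
  have h1 := Real.add_one_le_exp (-s)
  rw [Real.exp_neg] at h1
  have h2 := mul_le_mul_of_nonneg_right h1 (Real.exp_pos s).le
  rw [inv_mul_cancel₀ (Real.exp_pos s).ne'] at h2
  nlinarith [Real.exp_pos s]

lemma Icc_mem_Ioo01 {δ t : ℝ} (h0 : 0 < δ) (h2 : δ ≤ 1/2) (ht : t ∈ Set.Icc δ (1-δ)) :
    t ∈ Set.Ioo (0:ℝ) 1 :=
  ⟨lt_of_lt_of_le h0 ht.1, lt_of_le_of_lt ht.2 (by linarith)⟩

lemma neg_log_pos_of_Ioo {t : ℝ} (ht : t ∈ Set.Ioo (0:ℝ) 1) : 0 < -Real.log t :=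
  neg_pos.2 (Real.log_neg ht.1 ht.2)

lemma bddAbove_lamCrit {δ : ℝ} (h0 : 0 < δ) (h2 : δ ≤ 1/2) :
    BddAbove (lamCrit '' Set.Icc δ (1-δ)) := by
  refine ⟨δ⁻¹ * lamCrit δ, ?_⟩
  rintro _ ⟨t, ht, rfl⟩
  have htI := Icc_mem_Ioo01 h0 h2 ht
  have hδI : δ ∈ Set.Ioo (0:ℝ) 1 := ⟨h0, by linarith⟩
  have hle := lamCrit_le_scale hδI htI
  have ht0 : 0 < t := htI.1
  have einv : δ⁻¹ * δ = 1 := inv_mul_cancel₀ (ne_of_gt h0)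
  have h1 : max (t/δ) (δ/t) ≤ δ⁻¹ := by
    apply max_le
    · rw [div_le_iff₀ h0]
      nlinarith [ht.2]
    · rw [div_le_iff₀ ht0]
      nlinarith [mul_le_mul_of_nonneg_left ht.1 (inv_pos.2 h0).le]
  have h2' : |Real.log t| / |Real.log δ| ≤ 1 := by
    rw [div_le_one (abs_pos.2 (ne_of_lt (Real.log_neg h0 (by linarith))))]
    rw [abs_of_neg (Real.log_neg ht0 htI.2), abs_of_neg (Real.log_neg h0 (by linarith))]
    have := Real.log_le_log h0 ht.1
    linarith
  have hmax0 : 0 ≤ max (t/δ) (δ/t) := le_max_of_le_left (div_nonneg ht0.le h0.le)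
  calc lamCrit t ≤ max (t/δ) (δ/t) * (|Real.log t| / |Real.log δ|) * lamCrit δ := hle
    _ ≤ δ⁻¹ * 1 * lamCrit δ := by
        apply mul_le_mul_of_nonneg_right _ (lamCrit_nonneg δ)
        exact mul_le_mul h1 h2' (div_nonneg (abs_nonneg _) (abs_nonneg _)) (inv_pos.2 h0).le
    _ = δ⁻¹ * lamCrit δ := by ring

lemma M_nonneg {δ : ℝ} (h0 : 0 < δ) (h2 : δ ≤ 1/2) :
    0 ≤ sSup (lamCrit '' Set.Icc δ (1-δ)) := by
  have hδm : δ ∈ Set.Icc δ (1-δ) := ⟨le_refl δ, by linarith⟩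
  exact le_trans (lamCrit_nonneg δ)
    (le_csSup (bddAbove_lamCrit h0 h2) ⟨δ, hδm, rfl⟩)

lemma lamCrit_step {δ a b : ℝ} (h0 : 0 < δ) (h2 : δ ≤ 1/2)
    (ha : a ∈ Set.Icc δ (1-δ)) (hb : b ∈ Set.Icc δ (1-δ)) (hab : a ≤ b) :
    |lamCrit b - lamCrit a| ≤
      (Real.exp (δ⁻¹ * (1 + 1/|Real.log δ|) * (b-a)) - 1) * sSup (lamCrit '' Set.Icc δ (1-δ)) := by
  set C : ℝ := δ⁻¹ * (1 + 1/|Real.log δ|) with hC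
  set M : ℝ := sSup (lamCrit '' Set.Icc δ (1-δ)) with hM
  have hCpos : 0 < C := by
    rw [hC]
    have hl : 0 < |Real.log δ| := abs_pos.2 (ne_of_lt (Real.log_neg h0 (by linarith)))
    have : 0 < 1 + 1/|Real.log δ| := by positivity
    positivity
  have haI := Icc_mem_Ioo01 h0 h2 ha
  have hbI := Icc_mem_Ioo01 h0 h2 hb
  have hLa := neg_log_pos_of_Ioo haI
  have hLb := neg_log_pos_of_Ioo hbI
  have hLba : -Real.log b ≤ -Real.log a := neg_le_neg (Real.log_le_log haI.1 hab)
  have hE1 : 1 ≤ Real.exp (C*(b-a)) :=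
    Real.one_le_exp (mul_nonneg hCpos.le (by linarith))
  have haM : lamCrit a ≤ M := le_csSup (bddAbove_lamCrit h0 h2) ⟨a, ha, rfl⟩
  have hbM : lamCrit b ≤ M := le_csSup (bddAbove_lamCrit h0 h2) ⟨b, hb, rfl⟩
  have hRE : (b/a) * ((-Real.log a)/(-Real.log b)) ≤ Real.exp (C*(b-a)) :=
    ratio_le_exp h0 h2 ha hb hab
  have hmaxab : max (b/a) (a/b) = b/a := by
    apply max_eq_left
    calc a/b ≤ 1 := by rw [div_le_one hbI.1]; exact hab
      _ ≤ b/a := by rw [le_div_iff₀ haI.1]; linarith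
  have habs_a : |Real.log a| = -Real.log a := abs_of_neg (Real.log_neg haI.1 haI.2)
  have habs_b : |Real.log b| = -Real.log b := abs_of_neg (Real.log_neg hbI.1 hbI.2)
  have hba_nonneg : 0 ≤ b/a := div_nonneg hbI.1.le haI.1.le
  -- direction 1 : lamCrit b ≤ ρ_ab * lamCrit a with ρ_ab ≤ R
  have hd1 : lamCrit b - lamCrit a ≤ (Real.exp (C*(b-a)) - 1) * M := by
    have hsc := lamCrit_le_scale haI hbI
    rw [hmaxab, habs_a, habs_b] at hsc
    have hq : (-Real.log b)/(-Real.log a) ≤ (-Real.log a)/(-Real.log b) := by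
      rw [div_le_div_iff₀ hLa hLb]
      nlinarith
    have hρR : (b/a) * ((-Real.log b)/(-Real.log a)) ≤ (b/a) * ((-Real.log a)/(-Real.log b)) :=
      mul_le_mul_of_nonneg_left hq hba_nonneg
    have h3 : lamCrit b ≤ Real.exp (C*(b-a)) * lamCrit a := by
      calc lamCrit b ≤ (b/a) * ((-Real.log b)/(-Real.log a)) * lamCrit a := hsc
        _ ≤ Real.exp (C*(b-a)) * lamCrit a :=
            mul_le_mul_of_nonneg_right (le_trans hρR hRE) (lamCrit_nonneg a)
    nlinarith [lamCrit_nonneg a, mul_le_mul_of_nonneg_left haM (by linarith : (0:ℝ) ≤ Real.exp (C*(b-a)) - 1)]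
  -- direction 2
  have hd2 : lamCrit a - lamCrit b ≤ (Real.exp (C*(b-a)) - 1) * M := by
    have hsc := lamCrit_le_scale hbI haI
    have hmaxba : max (a/b) (b/a) = b/a := by
      apply max_eq_right
      calc a/b ≤ 1 := by rw [div_le_one hbI.1]; exact hab
        _ ≤ b/a := by rw [le_div_iff₀ haI.1]; linarith
    rw [hmaxba, habs_a, habs_b] at hsc
    have h3 : lamCrit a ≤ Real.exp (C*(b-a)) * lamCrit b := by
      calc lamCrit a ≤ (b/a) * ((-Real.log a)/(-Real.log b)) * lamCrit b := hsc
        _ ≤ Real.exp (C*(b-a)) * lamCrit b :=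
            mul_le_mul_of_nonneg_right hRE (lamCrit_nonneg b)
    nlinarith [lamCrit_nonneg b, mul_le_mul_of_nonneg_left hbM (by linarith : (0:ℝ) ≤ Real.exp (C*(b-a)) - 1)]
  rw [abs_sub_le_iff]
  exact ⟨hd1, hd2⟩

lemma lamCrit_chain {δ x y : ℝ} (h0 : 0 < δ) (h2 : δ ≤ 1/2)
    (hy : y ∈ Set.Icc δ (1-δ)) (hx : x ∈ Set.Icc δ (1-δ)) (hxy : y ≤ x) :
    |lamCrit x - lamCrit y| ≤
      δ⁻¹ * (1 + 1/|Real.log δ|) * sSup (lamCrit '' Set.Icc δ (1-δ)) * (x - y) := by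
  set C : ℝ := δ⁻¹ * (1 + 1/|Real.log δ|) with hC
  set M : ℝ := sSup (lamCrit '' Set.Icc δ (1-δ)) with hM
  have hCpos : 0 < C := by
    rw [hC]
    have hl : 0 < |Real.log δ| := abs_pos.2 (ne_of_lt (Real.log_neg h0 (by linarith)))
    have : 0 < 1 + 1/|Real.log δ| := by positivity
    positivity
  have hM0 : 0 ≤ M := M_nonneg h0 h2
  have key : ∀ n : ℕ, 1 ≤ n →
      |lamCrit x - lamCrit y| ≤ (n : ℝ) * (Real.exp (C*((x-y)/n)) - 1) * M := by
    intro n hn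
    have hncast : (0:ℝ) < (n:ℝ) := by exact_mod_cast hn
    set h : ℝ := (x - y)/n with hdefh
    have hh0 : 0 ≤ h := div_nonneg (by linarith) hncast.le
    have hnh : (n:ℝ) * h = x - y := by
      rw [hdefh]; field_simp
    have hmemi : ∀ i : ℕ, i ≤ n → y + i*h ∈ Set.Icc δ (1-δ) := by
      intro i hi
      have hih : (i:ℝ)*h ≤ (n:ℝ)*h :=
        mul_le_mul_of_nonneg_right (by exact_mod_cast hi) hh0
      constructor
      · have : (0:ℝ) ≤ (i:ℝ)*h := mul_nonneg (Nat.cast_nonneg i) hh0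
        linarith [hy.1]
      · rw [hnh] at hih
        linarith [hx.2]
    have hind : ∀ i : ℕ, i ≤ n →
        |lamCrit (y + i*h) - lamCrit y| ≤ (i:ℝ) * (Real.exp (C*h) - 1) * M := by
      intro i hi
      induction i with
      | zero => simp
      | succ k ih =>
        have hk' : k ≤ n := Nat.le_of_succ_le hi
        have hkh : y + (k:ℝ)*h ≤ y + ((k:ℝ)+1)*h := by nlinarith
        have hstep := lamCrit_step h0 h2 (hmemi k hk')
          (by push_cast; exact_mod_cast hmemi (k+1) hi) hkh
        have harg : C * (y + ((k:ℝ)+1)*h - (y + (k:ℝ)*h)) = C * h := by ring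
        rw [harg] at hstep
        have htri : |lamCrit (y + ((k:ℝ)+1)*h) - lamCrit y|
            ≤ |lamCrit (y + ((k:ℝ)+1)*h) - lamCrit (y + (k:ℝ)*h)|
              + |lamCrit (y + (k:ℝ)*h) - lamCrit y| := abs_sub_le _ _ _
        have hih2 := ih hk'
        push_cast
        push_cast at hih2
        nlinarith [htri, hstep, hih2]
    have hfin := hind n le_rfl
    have hyx : y + (n:ℝ)*h = x := by rw [hnh]; ring
    rwa [hyx] at hfin
  have hbound2 : ∀ n : ℕ, 1 ≤ n →
      |lamCrit x - lamCrit y| ≤ C*(x-y) * Real.exp (C*((x-y)/n)) * M := by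
    intro n hn
    refine (key n hn).trans ?_
    have hncast : (0:ℝ) < (n:ℝ) := by exact_mod_cast hn
    have hs0 : 0 ≤ C*((x-y)/n) := mul_nonneg hCpos.le (div_nonneg (by linarith) hncast.le)
    have hb := expm1_le hs0
    have hmm : (n:ℝ) * (Real.exp (C*((x-y)/n)) - 1) ≤ C*(x-y) * Real.exp (C*((x-y)/n)) := by
      have := mul_le_mul_of_nonneg_left hb hncast.le
      calc (n:ℝ) * (Real.exp (C*((x-y)/n)) - 1)
          ≤ (n:ℝ) * ((C*((x-y)/n)) * Real.exp (C*((x-y)/n))) := this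
        _ = C*(x-y) * Real.exp (C*((x-y)/n)) := by field_simp
    exact mul_le_mul_of_nonneg_right hmm hM0
  have h1 : Tendsto (fun n : ℕ => C*(x-y)/n) atTop (nhds 0) :=
    tendsto_const_div_atTop_nhds_zero_nat _
  have h1' : Tendsto (fun n : ℕ => C*((x-y)/n)) atTop (nhds 0) := by
    have : (fun n : ℕ => C*((x-y)/n)) = (fun n : ℕ => C*(x-y)/n) := by
      funext n; ring
    rwa [this]
  have h2' : Tendsto (fun n : ℕ => Real.exp (C*((x-y)/n))) atTop (nhds 1) := by
    have := (Real.continuous_exp.tendsto 0).comp h1'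
    rwa [Real.exp_zero] at this
  have h3 : Tendsto (fun n : ℕ => C*(x-y) * Real.exp (C*((x-y)/n)) * M) atTop
      (nhds (C*(x-y) * 1 * M)) :=
    (h2'.const_mul (C*(x-y))).mul_const M
  have hfin := ge_of_tendsto h3 (eventually_atTop.2 ⟨1, fun n hn => hbound2 n hn⟩)
  calc |lamCrit x - lamCrit y| ≤ C*(x-y) * 1 * M := hfin
    _ = C * M * (x-y) := by ring

lemma pairwise_bound {δ : ℝ} (h0 : 0 < δ) (h2 : δ ≤ 1/2) :
    ∀ x ∈ Set.Icc δ (1-δ), ∀ y ∈ Set.Icc δ (1-δ),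
      |lamCrit x - lamCrit y| ≤
        δ⁻¹ * (1 + 1 / |Real.log δ|) * sSup (lamCrit '' Set.Icc δ (1 - δ)) * |x - y| := by
  intro x hx y hy
  rcases le_total y x with hxy | hxy
  · rw [abs_of_nonneg (by linarith : (0:ℝ) ≤ x - y)]
    exact lamCrit_chain h0 h2 hy hx hxy
  · rw [abs_sub_comm (lamCrit x), abs_sub_comm x, abs_of_nonneg (by linarith : (0:ℝ) ≤ y - x)]
    exact lamCrit_chain h0 h2 hx hy hxy

/-- Lemma `le:cont-lambda`: `ε ↦ λ_c(ε)` is Lipschitz-continuous on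
compact subsets of `(0,1)`; on `[δ, 1-δ]` the Lipschitz constant is at most
`δ⁻¹(1 + 1/|log δ|) · sup λ_c`. -/
theorem stmt_19 :
    (∀ K : Set ℝ, K ⊆ Set.Ioo (0 : ℝ) 1 → IsCompact K →
      ∃ L : NNReal, LipschitzOnWith L lamCrit K) ∧
    ∀ δ : ℝ, 0 < δ → δ < 1 / 2 →
      ∀ x ∈ Set.Icc δ (1 - δ), ∀ y ∈ Set.Icc δ (1 - δ),
        |lamCrit x - lamCrit y| ≤
          δ⁻¹ * (1 + 1 / |Real.log δ|) * sSup (lamCrit '' Set.Icc δ (1 - δ)) * |x - y| := by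
  constructor
  · intro K hsub hK
    rcases K.eq_empty_or_nonempty with hKe | hne
    · exact ⟨0, by rw [hKe]; exact lipschitzOnWith_empty 0 lamCrit⟩
    · have ha : sInf K ∈ K := hK.sInf_mem hne
      have hb : sSup K ∈ K := hK.sSup_mem hne
      have haI := hsub ha
      have hbI := hsub hb
      set δ : ℝ := min (min (sInf K) (1 - sSup K)) (1/3) with hδdef
      have hδ0 : 0 < δ := lt_min (lt_min haI.1 (by linarith [hbI.2])) (by norm_num)
      have hδ2 : δ ≤ 1/2 := le_trans (min_le_right _ _) (by norm_num)
      have hKIcc : K ⊆ Set.Icc δ (1-δ) := by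
        intro z hz
        have h1 : sInf K ≤ z := csInf_le hK.bddBelow hz
        have h2 : z ≤ sSup K := le_csSup hK.bddAbove hz
        constructor
        · calc δ ≤ min (sInf K) (1 - sSup K) := min_le_left _ _
            _ ≤ sInf K := min_le_left _ _
            _ ≤ z := h1
        · have h3 : δ ≤ 1 - sSup K := le_trans (min_le_left _ _) (min_le_right _ _)
          linarith
      have hCst0 : 0 ≤ δ⁻¹ * (1 + 1/|Real.log δ|) * sSup (lamCrit '' Set.Icc δ (1-δ)) := by
        apply mul_nonneg _ (M_nonneg hδ0 hδ2)
        positivity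
      refine ⟨Real.toNNReal (δ⁻¹ * (1 + 1/|Real.log δ|) * sSup (lamCrit '' Set.Icc δ (1-δ))),
        LipschitzOnWith.of_dist_le_mul ?_⟩
      intro p hp q hq
      rw [Real.dist_eq, Real.dist_eq, Real.coe_toNNReal _ hCst0]
      exact pairwise_bound hδ0 hδ2 p (hKIcc hp) q (hKIcc hq)
  · intro δ hδ0 hδ2 x hx y hy
    exact pairwise_bound hδ0 (by linarith) x hx y hy
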